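/- Let ω : [0,1] → ℝ be a continuous increasing function with ω(0) = 0 satisfying the Dini condition ∫₀^r ω(s)/s ds < ∞ for all r ∈ (0,1). Fix κ ∈ (0,1) and γ ∈ (0,1), and define ω̃(t) = ∑_{i=1}^∞ κ^{iγ}·(ω(κ^{-i}t) if κ^{-i}t ≤ 1, else ω(1)). Then ω̃ also satisfies the Dini condition: ∫₀^r ω̃(t)/t dt < ∞ for all r ∈ (0,1). -/

import Mathlib

open MeasureTheory Set Filter

lemma aux_integrable_tsum {α : Type*} [MeasurableSpace α] {μ : Measure α} {F : ℕ → α → ℝ}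
    (hF_int : ∀ i, Integrable (F i) μ)
    (hF_sum : Summable fun i => ∫ a, ‖F i a‖ ∂μ) :
    Integrable (fun a => ∑' i, F i a) μ := by
  have hf'' : ∀ i, AEMeasurable (fun x => (‖F i x‖₊ : ENNReal)) μ := fun i =>
    (hF_int i).1.aemeasurable.nnnorm.coe_nnreal_ennreal
  have key : ∑' i, ∫⁻ a, (‖F i a‖₊ : ENNReal) ∂μ ≠ ⊤ := by
    have h1 : ∀ i, ∫⁻ a, (‖F i a‖₊ : ENNReal) ∂μ = ENNReal.ofReal (∫ a, ‖F i a‖ ∂μ) := fun i =>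
      (ofReal_integral_norm_eq_lintegral_enorm (hF_int i)).symm
    rw [funext h1, ← ENNReal.ofReal_tsum_of_nonneg
      (fun i => integral_nonneg fun a => norm_nonneg _) hF_sum]
    exact ENNReal.ofReal_ne_top
  have lint : ∫⁻ a, ∑' i, (‖F i a‖₊ : ENNReal) ∂μ ≠ ⊤ := by
    rwa [lintegral_tsum hf'']
  have hhh : ∀ᵐ a ∂μ, Summable fun n => ‖F n a‖ := by
    filter_upwards [ae_lt_top' (AEMeasurable.ennreal_tsum hf'') lint] with a ha
    have h2 : Summable fun n => (‖F n a‖₊ : ℝ) :=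
      ENNReal.tsum_coe_ne_top_iff_summable_coe.1 ha.ne
    simpa [coe_nnnorm] using h2
  constructor
  · refine aestronglyMeasurable_of_tendsto_ae atTop
      (f := fun N a => ∑ i ∈ Finset.range N, F i a) (fun N => ?_) ?_
    · exact Finset.aestronglyMeasurable_fun_sum _ fun i _ => (hF_int i).1
    · filter_upwards [hhh] with a ha
      exact ha.of_norm.hasSum.tendsto_sum_nat
  · refine lt_of_le_of_lt (lintegral_mono_ae (hhh.mono fun a ha => ?_)) lint.lt_top
    have h2 : Summable fun i => ‖F i a‖₊ := by
      rw [← NNReal.summable_coe]; simpa [coe_nnnorm] using ha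
    calc (‖∑' i, F i a‖₊ : ENNReal) ≤ ((∑' i, ‖F i a‖₊ : NNReal) : ENNReal) :=
          ENNReal.coe_le_coe.2 (nnnorm_tsum_le h2)
      _ = ∑' i, (‖F i a‖₊ : ENNReal) := ENNReal.coe_tsum h2

/-- If ω satisfies the Dini condition, then so does the derived modulus ω̃. -/
theorem stmt1 (ω : ℝ → ℝ) (hcont : ContinuousOn ω (Set.Icc 0 1))
    (hmono : MonotoneOn ω (Set.Icc 0 1)) (h0 : ω 0 = 0)
    (hDini : ∀ r ∈ Set.Ioo (0:ℝ) 1, IntegrableOn (fun s => ω s / s) (Set.Ioo 0 r))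
    (κ γ : ℝ) (hκ : κ ∈ Set.Ioo (0:ℝ) 1) (hγ : γ ∈ Set.Ioo (0:ℝ) 1) :
    ∀ r ∈ Set.Ioo (0:ℝ) 1,
      IntegrableOn
        (fun t => (∑' i : ℕ, κ ^ (((i:ℝ) + 1) * γ) *
          (if κ ^ (-((i:ℝ) + 1)) * t ≤ 1 then ω (κ ^ (-((i:ℝ) + 1)) * t) else ω 1)) / t)
        (Set.Ioo 0 r) := by
  obtain ⟨hκ0, hκ1⟩ := hκ
  obtain ⟨hγ0, hγ1⟩ := hγ
  intro r hr
  obtain ⟨hr0, hr1⟩ := hr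
  set g : ℝ → ℝ := fun s => ω s / s with hg
  have ωnn : ∀ s ∈ Icc (0:ℝ) 1, 0 ≤ ω s := fun s hs => by
    have := hmono (left_mem_Icc.2 zero_le_one) hs hs.1
    linarith
  have ω1nn : 0 ≤ ω 1 := ωnn 1 (right_mem_Icc.2 zero_le_one)
  have gnn : ∀ s ∈ Ioc (0:ℝ) 1, 0 ≤ g s := fun s hs =>
    div_nonneg (ωnn s ⟨hs.1.le, hs.2⟩) hs.1.le
  have K : IntegrableOn g (Ioc 0 1) volume := by
    have K1 : IntegrableOn g (Ioo 0 (1/2)) volume := hDini (1/2) ⟨by norm_num, by norm_num⟩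
    have K2 : IntegrableOn g (Icc (1/2) 1) volume := by
      apply ContinuousOn.integrableOn_Icc
      apply ContinuousOn.div
      · exact hcont.mono (Icc_subset_Icc (by norm_num) le_rfl)
      · exact continuousOn_id
      · intro x hx
        have : (1/2 : ℝ) ≤ x := hx.1
        positivity
    refine (K1.union K2).mono_set ?_
    intro x hx
    rcases le_or_gt (1/2) x with h | h
    · exact Or.inr ⟨h, hx.2⟩
    · exact Or.inl ⟨hx.1, h⟩
  have Kint : IntervalIntegrable g volume 0 1 := by
    rw [intervalIntegrable_iff_integrableOn_Ioc_of_le zero_le_one]; exact K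
  set D := ∫ s in (0:ℝ)..1, g s with hD
  have hDle : ∀ u : ℝ, 0 ≤ u → u ≤ 1 → ∫ s in (0:ℝ)..u, g s ≤ D := by
    intro u hu0 hu1
    apply intervalIntegral.integral_mono_interval le_rfl hu0 hu1
    · filter_upwards [ae_restrict_mem measurableSet_Ioc] with s hs using gnn s hs
    · exact Kint
  set L := -Real.log κ with hL
  have hL0 : 0 < L := by
    simp only [hL, neg_pos]
    exact Real.log_neg hκ0 hκ1
  set G : ℕ → ℝ → ℝ := fun i t =>
    κ ^ (((i:ℝ) + 1) * γ) *
      (if κ ^ (-((i:ℝ) + 1)) * t ≤ 1 then ω (κ ^ (-((i:ℝ) + 1)) * t) else ω 1) / t with hGdef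
  have hfun : (fun t => (∑' i : ℕ, κ ^ (((i:ℝ) + 1) * γ) *
      (if κ ^ (-((i:ℝ) + 1)) * t ≤ 1 then ω (κ ^ (-((i:ℝ) + 1)) * t) else ω 1)) / t)
      = fun t => ∑' i, G i t := by
    funext t
    exact tsum_div_const.symm
  have main : ∀ i : ℕ, IntegrableOn (G i) (Ioc 0 r) volume ∧
      ∫ t in Ioc 0 r, ‖G i t‖ ≤ κ ^ (((i:ℝ)+1)*γ) * (D + ω 1 * (((i:ℝ)+1) * L)) := by
    intro i
    set a := κ ^ (-((i:ℝ)+1)) with ha_def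
    set c := κ ^ ((i:ℝ)+1) with hc_def
    have hc0 : 0 < c := Real.rpow_pos_of_pos hκ0 _
    have ha0 : 0 < a := Real.rpow_pos_of_pos hκ0 _
    have hac : a = c⁻¹ := by
      rw [ha_def, hc_def, Real.rpow_neg hκ0.le]
    have hcond : ∀ t : ℝ, (a * t ≤ 1 ↔ t ≤ c) := by
      intro t
      rw [hac, inv_mul_le_iff₀ hc0, mul_one]
    set m := min r c with hm
    have hm0 : 0 < m := lt_min hr0 hc0
    have hmr : m ≤ r := min_le_left _ _
    have hmc : m ≤ c := min_le_right _ _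
    set e := κ ^ (((i:ℝ)+1)*γ) with he
    have he0 : 0 < e := Real.rpow_pos_of_pos hκ0 _
    set H : ℝ → ℝ := fun t => (if a * t ≤ 1 then ω (a * t) else ω 1) / t with hHdef
    have hGH : ∀ t, G i t = e * H t := fun t => mul_div_assoc _ _ _
    set F1 : ℝ → ℝ := fun t => a * g (a * t) with hF1
    set F2 : ℝ → ℝ := fun t => ω 1 * t⁻¹ with hF2
    have EqOn1 : EqOn H F1 (Ioc 0 m) := by
      intro t ht
      have h1 : a * t ≤ 1 := (hcond t).2 (ht.2.trans hmc)
      have ht0 : t ≠ 0 := ht.1.ne'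
      simp only [hHdef, hF1, hg, if_pos h1]
      field_simp
    have EqOn2 : EqOn H F2 (Ioc m r) := by
      intro t ht
      have htc : c < t := by
        by_contra hle
        push_neg at hle
        exact absurd (le_min ht.2 hle) (not_le.2 ht.1)
      have h1 : ¬ (a * t ≤ 1) := by rw [hcond]; exact not_le.2 htc
      simp only [hHdef, hF2, if_neg h1]
      rw [div_eq_mul_inv]
    have ham1 : a * m ≤ 1 := (hcond m).2 hmc
    have ham0 : 0 < a * m := mul_pos ha0 hm0
    have hgint : IntervalIntegrable g volume 0 (a * m) := by
      rw [intervalIntegrable_iff_integrableOn_Ioc_of_le ham0.le]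
      exact K.mono_set (Ioc_subset_Ioc_right ham1)
    have hF1int : IntegrableOn F1 (Ioc 0 m) volume := by
      have h2 := (hgint.comp_mul_left (c := a)).const_mul a
      rw [zero_div, mul_div_cancel_left₀ _ ha0.ne'] at h2
      rw [intervalIntegrable_iff_integrableOn_Ioc_of_le hm0.le] at h2
      exact h2
    have hF2int : IntegrableOn F2 (Ioc m r) volume := by
      have h2 : IntegrableOn F2 (Icc m r) volume := by
        apply ContinuousOn.integrableOn_Icc
        exact continuousOn_const.mul (continuousOn_id.inv₀ fun t ht =>
          (lt_of_lt_of_le hm0 ht.1).ne')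
      exact h2.mono_set Ioc_subset_Icc_self
    have hHint1 : IntegrableOn H (Ioc 0 m) volume :=
      hF1int.congr_fun EqOn1.symm measurableSet_Ioc
    have hHint2 : IntegrableOn H (Ioc m r) volume :=
      hF2int.congr_fun EqOn2.symm measurableSet_Ioc
    have hHint : IntegrableOn H (Ioc 0 r) volume := by
      have h2 := hHint1.union hHint2
      rwa [Ioc_union_Ioc_eq_Ioc hm0.le hmr] at h2
    have hGint : IntegrableOn (G i) (Ioc 0 r) volume := by
      have h2 : G i = fun t => e * H t := funext hGH
      rw [h2]
      exact hHint.const_mul e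
    refine ⟨hGint, ?_⟩
    have hnorm : ∀ t, ‖G i t‖ = e * ‖H t‖ := fun t => by
      rw [hGH t, norm_mul, Real.norm_of_nonneg he0.le]
    calc ∫ t in Ioc 0 r, ‖G i t‖ = ∫ t in Ioc 0 r, e * ‖H t‖ := by
          simp_rw [hnorm]
      _ = e * ∫ t in Ioc 0 r, ‖H t‖ := integral_const_mul e _
      _ ≤ e * (D + ω 1 * (((i:ℝ)+1) * L)) := by
          apply mul_le_mul_of_nonneg_left _ he0.le
          have hsplit : ∫ t in Ioc 0 r, ‖H t‖
              = (∫ t in Ioc 0 m, ‖H t‖) + ∫ t in Ioc m r, ‖H t‖ := by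
            rw [← Ioc_union_Ioc_eq_Ioc hm0.le hmr,
              setIntegral_union (Ioc_disjoint_Ioc_of_le le_rfl) measurableSet_Ioc
                hHint1.norm hHint2.norm]
          rw [hsplit]
          have hP1 : ∫ t in Ioc 0 m, ‖H t‖ ≤ D := by
            have hcongr : ∫ t in Ioc 0 m, ‖H t‖ = ∫ t in Ioc 0 m, F1 t := by
              apply setIntegral_congr_fun measurableSet_Ioc
              intro t ht
              show ‖H t‖ = F1 t
              have h1 : 0 ≤ F1 t := by
                have hat : a * t ∈ Ioc (0:ℝ) 1 :=
                  ⟨mul_pos ha0 ht.1, (hcond t).2 (ht.2.trans hmc)⟩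
                exact mul_nonneg ha0.le (gnn _ hat)
              rw [EqOn1 ht, Real.norm_of_nonneg h1]
            rw [hcongr, ← intervalIntegral.integral_of_le hm0.le]
            have hcomp : ∫ t in (0:ℝ)..m, F1 t = ∫ x in (0:ℝ)..(a * m), g x := by
              rw [hF1]
              rw [intervalIntegral.integral_const_mul]
              rw [show a * ∫ t in (0:ℝ)..m, g (a * t)
                  = a • ∫ t in (0:ℝ)..m, g (a * t) from rfl]
              rw [intervalIntegral.smul_integral_comp_mul_left g a, mul_zero]
            rw [hcomp]
            exact hDle (a * m) ham0.le ham1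
          have hP2 : ∫ t in Ioc m r, ‖H t‖ ≤ ω 1 * (((i:ℝ)+1) * L) := by
            have hcongr : ∫ t in Ioc m r, ‖H t‖ = ∫ t in Ioc m r, F2 t := by
              apply setIntegral_congr_fun measurableSet_Ioc
              intro t ht
              show ‖H t‖ = F2 t
              have h1 : 0 ≤ F2 t := by
                have : 0 < t := lt_trans hm0 ht.1
                positivity
              rw [EqOn2 ht, Real.norm_of_nonneg h1]
            have hlog : Real.log (r / m) ≤ ((i:ℝ)+1) * L := by
              rcases le_total c r with hcr | hrc
              · rw [hm, min_eq_right hcr, Real.log_div hr0.ne' hc0.ne', hc_def,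
                  Real.log_rpow hκ0]
                have hlr : Real.log r ≤ 0 := Real.log_nonpos hr0.le hr1.le
                rw [hL]
                nlinarith [hL0, hlr]
              · rw [hm, min_eq_left hrc, div_self hr0.ne', Real.log_one]
                positivity
            rw [hcongr, ← intervalIntegral.integral_of_le hmr]
            rw [hF2, intervalIntegral.integral_const_mul, integral_inv_of_pos hm0 hr0]
            exact mul_le_mul_of_nonneg_left hlog ω1nn
          linarith
  set q := κ ^ γ with hq
  have hq0 : 0 < q := Real.rpow_pos_of_pos hκ0 _
  have hq1 : q < 1 := Real.rpow_lt_one hκ0.le hκ1 hγ0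
  have hBe : ∀ i : ℕ, κ ^ (((i:ℝ)+1)*γ) = q ^ (i+1) := by
    intro i
    rw [hq, mul_comm, Real.rpow_mul hκ0.le]
    rw [show ((i:ℝ)+1) = ((i+1 : ℕ) : ℝ) by push_cast; ring, Real.rpow_natCast]
  have hBsum : Summable (fun i : ℕ => κ ^ (((i:ℝ)+1)*γ) * (D + ω 1 * (((i:ℝ)+1) * L))) := by
    simp only [hBe]
    have h1 : Summable (fun n : ℕ => ((n:ℝ)+1) * q ^ (n+1)) := by
      have h2 := summable_pow_mul_geometric_of_norm_lt_one (R := ℝ) 1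
        (r := q) (by rw [Real.norm_eq_abs, abs_of_pos hq0]; exact hq1)
      have h3 := (summable_nat_add_iff 1).2 h2
      simpa using h3
    have h0' : Summable (fun n : ℕ => q ^ (n+1)) :=
      (summable_nat_add_iff 1).2 (summable_geometric_of_lt_one hq0.le hq1)
    refine ((h0'.mul_right D).add (h1.mul_right (ω 1 * L))).congr fun n => ?_
    ring
  rw [hfun]
  have hint' : ∀ i, Integrable (G i) (volume.restrict (Ioo 0 r)) := fun i =>
    ((main i).1).mono_set Ioo_subset_Ioc_self
  apply aux_integrable_tsum hint'
  apply Summable.of_nonneg_of_le (fun i => integral_nonneg fun t => norm_nonneg _)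
    (fun i => ?_) hBsum
  have h2 : ∫ a, ‖G i a‖ ∂(volume.restrict (Ioo 0 r)) = ∫ t in Ioc 0 r, ‖G i t‖ :=
    (integral_Ioc_eq_integral_Ioo).symm
  rw [h2]
  exact (main i).2
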